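/- For q ≥ 3 fixed and γ ∈ (0,1), with N → ∞, the quantity A_N = prod over P in 𝕡 of (1 + psi(P)^2 + psi(P)|P|^{-1/2})/(1 + psi(P)^2) satisfies ln A_N ≥ (γ + o(1)) sqrt(ln N · ln ln ln N / ln ln N), where 𝕡 is the set of monic irreducible polynomials P with log_q(q ln N ln ln N) < deg P ≤ log_q(q^{(ln ln N)^γ} ln N ln ln N) and psi(P) = sqrt(ln N · ln ln N / ln ln ln N) · |P|^{-1/2} (deg P − log_q(ln N ln ln N))^{-1}. -/

import Mathlib

open Polynomial

open UniqueFactorizationMonoid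

/-- The set 𝕡 of monic irreducible polynomials P with
log_q(q ln N ln ln N) < deg P ≤ log_q(q^{(ln ln N)^γ} ln N ln ln N). -/
noncomputable def resonatorPrimes (F : Type*) [Field F] [Fintype F] (γ N : ℝ) :
    Set F[X] :=
  {P | P.Monic ∧ Irreducible P ∧
    Real.logb (Fintype.card F)
        ((Fintype.card F : ℝ) * Real.log N * Real.log (Real.log N)) < (P.natDegree : ℝ) ∧
    (P.natDegree : ℝ) ≤ Real.logb (Fintype.card F)
        ((Fintype.card F : ℝ) ^ ((Real.log (Real.log N)) ^ γ) *
          Real.log N * Real.log (Real.log N))}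

/-- psi(P) = sqrt(ln N ln ln N / ln ln ln N) |P|^{-1/2} (deg P − log_q(ln N ln ln N))^{-1}. -/
noncomputable def resonatorPsi (F : Type*) [Field F] [Fintype F] (N : ℝ) (P : F[X]) : ℝ :=
  Real.sqrt (Real.log N * Real.log (Real.log N) / Real.log (Real.log (Real.log N))) /
    Real.sqrt ((Fintype.card F : ℝ) ^ P.natDegree) /
    ((P.natDegree : ℝ) - Real.logb (Fintype.card F) (Real.log N * Real.log (Real.log N)))

-- q^d - 1 ∣ q^n - 1 → d ∣ n
lemma nat_dvd_of_pow_sub_one_dvd {q : ℕ} (hq : 2 ≤ q) : ∀ (n d : ℕ), q ^ d - 1 ∣ q ^ n - 1 → d ∣ n := by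
  intro n
  induction n using Nat.strong_induction_on with
  | _ n ih =>
    intro d hdvd
    rcases Nat.lt_or_ge n d with h | h
    · -- q^n - 1 < q^d - 1, so q^n - 1 = 0, so n = 0
      rcases Nat.eq_zero_or_pos n with rfl | hn
      · exact dvd_zero d
      · exfalso
        have h1 : q ^ n - 1 < q ^ d - 1 :=
          Nat.sub_lt_sub_right (Nat.one_le_pow _ _ (by omega)) (Nat.pow_lt_pow_right (by omega) h)
        have h2 : 0 < q ^ n - 1 := by
          have : 2 ≤ q ^ n := le_trans hq (Nat.le_self_pow (by omega) q)
          omega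
        have := Nat.le_of_dvd h2 hdvd
        omega
    · rcases Nat.eq_zero_or_pos d with rfl | hd
      · simp at hdvd
        have : 2 ≤ q ^ n ∨ n = 0 := by
          rcases Nat.eq_zero_or_pos n with rfl | hn
          · right; rfl
          · left; exact le_trans hq (Nat.le_self_pow (by omega) q)
        rcases this with h2 | rfl
        · omega
        · simp
      · -- n = (n - d) + d, q^n - 1 = q^(n-d) * (q^d - 1) + (q^(n-d) - 1)
        have hkey : q ^ n - 1 = q ^ (n - d) * (q ^ d - 1) + (q ^ (n - d) - 1) := by
          have h1 : 1 ≤ q ^ (n - d) := Nat.one_le_pow _ _ (by omega)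
          have h2 : 1 ≤ q ^ d := Nat.one_le_pow _ _ (by omega)
          have h3 : q ^ (n - d) * q ^ d = q ^ n := by
            rw [← pow_add]; congr 1; omega
          have h4 : q ^ (n-d) ≤ q ^ n := Nat.pow_le_pow_right (by omega) (by omega)
          have h5 : 1 ≤ q ^ n := Nat.one_le_pow _ _ (by omega)
          have h3' : (q:ℤ) ^ (n - d) * (q:ℤ) ^ d = (q:ℤ) ^ n := by exact_mod_cast h3
          zify [h1, h2, h5]
          rw [← h3']
          ring
        have hdvd2 : q ^ d - 1 ∣ q ^ (n - d) - 1 := by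
          rw [hkey] at hdvd
          exact (Nat.dvd_add_right (Dvd.intro_left _ rfl)).mp hdvd
        have hrec := ih (n - d) (by omega) d hdvd2
        have : d ∣ (n - d) + d := Nat.dvd_add hrec (dvd_refl d)
        rwa [Nat.sub_add_cancel h] at this

section PartI
variable {F : Type*} [Field F] [Fintype F]

-- Lemma C: a monic irreducible polynomial of degree d divides X^(q^d) - X
lemma irred_dvd_X_pow_card_sub_X {P : F[X]} (hP : Irreducible P) :
    P ∣ X ^ (Fintype.card F ^ P.natDegree) - X := by
  classical
  haveI : Fact (Irreducible P) := ⟨hP⟩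
  letI : Module.Finite F (AdjoinRoot P) :=
    Module.Finite.of_basis (AdjoinRoot.powerBasis hP.ne_zero).basis
  letI : Finite (AdjoinRoot P) := Module.finite_of_finite F
  letI : Fintype (AdjoinRoot P) := Fintype.ofFinite _
  have hcardK : Fintype.card (AdjoinRoot P) = Fintype.card F ^ P.natDegree := by
    rw [Module.card_fintype (AdjoinRoot.powerBasis hP.ne_zero).basis, Fintype.card_fin,
      AdjoinRoot.powerBasis_dim]
  have hroot : (AdjoinRoot.root P) ^ (Fintype.card F ^ P.natDegree) = AdjoinRoot.root P := by
    have := FiniteField.pow_card (AdjoinRoot.root P)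
    rwa [hcardK] at this
  rw [← AdjoinRoot.mk_eq_zero, map_sub, map_pow, AdjoinRoot.mk_X, hroot, sub_self]

-- Lemma B: an irreducible factor of X^(q^n) - X has degree dividing n
lemma natDegree_dvd_of_dvd_X_pow_card_sub_X {n : ℕ} (hn : 1 ≤ n) {P : F[X]} (hP : Irreducible P)
    (hdvd : P ∣ X ^ (Fintype.card F ^ n) - X) : P.natDegree ∣ n := by
  classical
  set q := Fintype.card F with hqdef
  have hq2 : 2 ≤ q := Fintype.one_lt_card
  haveI : Fact (Irreducible P) := ⟨hP⟩
  letI : Module.Finite F (AdjoinRoot P) :=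
    Module.Finite.of_basis (AdjoinRoot.powerBasis hP.ne_zero).basis
  letI : Finite (AdjoinRoot P) := Module.finite_of_finite F
  letI : Fintype (AdjoinRoot P) := Fintype.ofFinite _
  have hcardK : Fintype.card (AdjoinRoot P) = q ^ P.natDegree := by
    rw [Module.card_fintype (AdjoinRoot.powerBasis hP.ne_zero).basis, Fintype.card_fin,
      AdjoinRoot.powerBasis_dim]
  -- characteristic
  set p := ringChar F with hpdef
  haveI hpprime : Fact p.Prime := ⟨CharP.char_is_prime F p⟩
  obtain ⟨k, hkprime, hcardF⟩ := FiniteField.card F p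
  haveI : CharP (AdjoinRoot P) p :=
    charP_of_injective_algebraMap (algebraMap F (AdjoinRoot P)).injective p
  -- the root is fixed by x ↦ x^(q^n)
  have hα : (AdjoinRoot.root P) ^ q ^ n = AdjoinRoot.root P := by
    have h0 : AdjoinRoot.mk P (X ^ q ^ n - X) = 0 := AdjoinRoot.mk_eq_zero.mpr hdvd
    rw [map_sub, map_pow, AdjoinRoot.mk_X] at h0
    exact sub_eq_zero.mp h0
  have hqn : q ^ n = p ^ ((k : ℕ) * n) := by rw [hqdef, hcardF, ← pow_mul]
  -- every element is fixed by x ↦ x^(q^n)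
  have hfrob : ∀ x : AdjoinRoot P, x ^ q ^ n = x := by
    intro x
    have hx : x ∈ (⊤ : Subalgebra F (AdjoinRoot P)) := trivial
    rw [← AdjoinRoot.adjoinRoot_eq_top] at hx
    induction hx using Algebra.adjoin_induction with
    | mem y hy =>
      rw [Set.mem_singleton_iff] at hy
      rw [hy]; exact hα
    | algebraMap r =>
      rw [← map_pow]
      congr 1
      exact FiniteField.pow_card_pow n r
    | add y z hy hz ihy ihz => rw [hqn] at ihy ihz ⊢; rw [add_pow_char_pow, ihy, ihz]
    | mul y z hy hz ihy ihz => rw [mul_pow, ihy, ihz]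
  -- cyclic group argument
  obtain ⟨g, hg⟩ := IsCyclic.exists_generator (α := (AdjoinRoot P)ˣ)
  have horder : orderOf g = q ^ P.natDegree - 1 := by
    rw [orderOf_eq_card_of_forall_mem_zpowers hg, Nat.card_eq_fintype_card,
      Fintype.card_units, hcardK]
  have hgpow : g ^ (q ^ n - 1) = 1 := by
    have h2 : g ^ q ^ n = g := by
      ext
      push_cast [Units.val_pow_eq_pow_val]
      exact hfrob g
    have hq1 : 1 ≤ q ^ n := Nat.one_le_pow _ _ (by omega)
    have h3 : g ^ (q ^ n - 1) * g = g := by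
      rw [← pow_succ, Nat.sub_add_cancel hq1]; exact h2
    have := mul_right_cancel (h3.trans (one_mul g).symm)
    exact this
  have hdvd2 : q ^ P.natDegree - 1 ∣ q ^ n - 1 :=
    horder ▸ orderOf_dvd_of_pow_eq_one hgpow
  exact nat_dvd_of_pow_sub_one_dvd hq2 n _ hdvd2

end PartI

section Count
variable {F : Type*} [Field F] [Fintype F]

lemma geom_sum_le {q : ℕ} (hq : 3 ≤ q) (m : ℕ) :
    ∑ d ∈ Finset.range (m + 1), q ^ d ≤ 2 * q ^ m := by
  induction m with
  | zero => simp
  | succ m ih =>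
    rw [Finset.sum_range_succ]
    have : 2 * q ^ m ≤ q ^ (m + 1) := by
      rw [pow_succ, Nat.mul_comm (q ^ m) q]
      exact Nat.mul_le_mul_right _ (by omega)
    omega

lemma countLemma (hq3 : 3 ≤ Fintype.card F) (n : ℕ) :
    ∃ S : Finset F[X], (∀ P ∈ S, P.Monic ∧ Irreducible P ∧ P.natDegree = n) ∧
      (10 ≤ n → 99 * Fintype.card F ^ n ≤ 100 * (n * S.card)) := by
  classical
  rcases Nat.eq_zero_or_pos n with rfl | hn
  · exact ⟨∅, by simp, by omega⟩
  set q := Fintype.card F with hqdef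
  have hq2 : 2 ≤ q := by omega
  set Q := q ^ n with hQdef
  have hQ1 : 1 < Q := Nat.one_lt_pow (by omega) (by omega)
  set f : F[X] := X ^ Q - X with hfdef
  have hfmonic : f.Monic := monic_X_pow_sub
    (by rw [degree_X]; exact_mod_cast (by omega : 1 < Q))
  have hf0 : f ≠ 0 := hfmonic.ne_zero
  have hfdeg : f.natDegree = Q := FiniteField.X_pow_card_sub_X_natDegree_eq F hQ1
  -- squarefree
  set p := ringChar F with hpdef
  haveI hpprime : Fact p.Prime := ⟨CharP.char_is_prime F p⟩
  obtain ⟨k, hkprime, hcardF⟩ := FiniteField.card F p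
  have hpdvd : p ∣ Q := by
    rw [hQdef, hqdef, hcardF, ← pow_mul]
    exact dvd_pow_self p (by positivity)
  have hsqfree : Squarefree f := (galois_poly_separable p Q hpdvd).squarefree
  -- normalized factors
  set M := normalizedFactors f with hMdef
  have hMirr : ∀ P ∈ M, Irreducible P := fun P hP => irreducible_of_normalized_factor P hP
  have h0M : (0 : F[X]) ∉ M := fun h => (hMirr 0 h).ne_zero rfl
  have hMmonic : ∀ P ∈ M, P.Monic := fun P hP =>
    (normalize_normalized_factor P hP) ▸ monic_normalize (hMirr P hP).ne_zero
  have hMdvd : ∀ P ∈ M, P ∣ f := fun P hP => dvd_of_mem_normalizedFactors hP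
  have hnodup : M.Nodup := (squarefree_iff_nodup_normalizedFactors hf0).mp hsqfree
  have hprodmonic : M.prod.Monic := by
    have := monic_multiset_prod_of_monic M id hMmonic
    rwa [Multiset.map_id] at this
  have hprod : M.prod = f :=
    eq_of_monic_of_associated hprodmonic hfmonic (prod_normalizedFactors hf0)
  have hdegsum : (M.map natDegree).sum = Q := by
    rw [← natDegree_multiset_prod M h0M, hprod, hfdeg]
  set Mf : Finset F[X] := ⟨M, hnodup⟩ with hMfdef
  have hmemMf : ∀ P, P ∈ Mf ↔ P ∈ M := fun P => Iff.rfl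
  have hsumMf : ∑ P ∈ Mf, P.natDegree = Q := hdegsum
  -- degrees divide n
  have hdegdvd : ∀ P ∈ Mf, P.natDegree ∣ n := fun P hP =>
    natDegree_dvd_of_dvd_X_pow_card_sub_X hn (hMirr P hP) (hMdvd P hP)
  -- filter of degree d has product dividing X^(q^d) - X
  have hfilter_bound : ∀ d : ℕ, 1 ≤ d →
      d * (Mf.filter (fun P => P.natDegree = d)).card ≤ q ^ d := by
    intro d hd
    set Td := Mf.filter (fun P => P.natDegree = d) with hTd
    have hTdmem : ∀ P ∈ Td, P ∈ Mf ∧ P.natDegree = d := fun P hP => by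
      rw [hTd, Finset.mem_filter] at hP; exact hP
    have hcop : (↑Td : Set F[X]).Pairwise (Function.onFun IsCoprime (id : F[X] → F[X]))  := by
      intro P hP P' hP' hne
      refine ((hMirr P ((hTdmem P hP).1)).coprime_iff_not_dvd).mpr (fun hdvd => hne ?_)
      exact eq_of_monic_of_associated (hMmonic P (hTdmem P hP).1) (hMmonic P' (hTdmem P' hP').1)
        ((hMirr P (hTdmem P hP).1).associated_of_dvd (hMirr P' (hTdmem P' hP').1) hdvd)
    have hdvdall : ∀ P ∈ Td, P ∣ X ^ (q ^ d) - X := by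
      intro P hP
      have := irred_dvd_X_pow_card_sub_X (hMirr P (hTdmem P hP).1)
      rwa [(hTdmem P hP).2] at this
    have hproddvd : ∏ P ∈ Td, P ∣ X ^ (q ^ d) - X := Finset.prod_dvd_of_coprime hcop hdvdall
    have hne0 : (X ^ (q ^ d) - X : F[X]) ≠ 0 :=
      FiniteField.X_pow_card_sub_X_ne_zero F (Nat.one_lt_pow (by omega) (by omega))
    have hdegle := natDegree_le_of_dvd hproddvd hne0
    rw [natDegree_prod _ _ (fun P hP => (hMirr P (hTdmem P hP).1).ne_zero),
      FiniteField.X_pow_card_sub_X_natDegree_eq F (Nat.one_lt_pow (by omega) (by omega))] at hdegle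
    calc d * Td.card = ∑ _P ∈ Td, d := by rw [Finset.sum_const, smul_eq_mul, Nat.mul_comm]
    _ = ∑ P ∈ Td, P.natDegree := Finset.sum_congr rfl (fun P hP => ((hTdmem P hP).2).symm)
    _ ≤ q ^ d := hdegle
  -- split into degree-n part and the rest
  set S := Mf.filter (fun P => P.natDegree = n) with hSdef
  refine ⟨S, fun P hP => ?_, fun hn10 => ?_⟩
  · rw [hSdef, Finset.mem_filter] at hP
    exact ⟨hMmonic P hP.1, hMirr P hP.1, hP.2⟩
  -- the bound
  have hsplit : ∑ P ∈ S, P.natDegree + ∑ P ∈ Mf.filter (fun P => ¬ P.natDegree = n), P.natDegree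
      = Q := by rw [Finset.sum_filter_add_sum_filter_not, hsumMf]
  have hSsum : ∑ P ∈ S, P.natDegree = n * S.card := by
    calc ∑ P ∈ S, P.natDegree = ∑ _P ∈ S, n :=
          Finset.sum_congr rfl (fun P hP => (Finset.mem_filter.mp hP).2)
    _ = n * S.card := by rw [Finset.sum_const, smul_eq_mul, Nat.mul_comm]
  -- the rest has small total degree
  set R := Mf.filter (fun P => ¬ P.natDegree = n) with hRdef
  have hRsub : R ⊆ (Finset.range (n / 2 + 1)).biUnion
      (fun d => Mf.filter (fun P => P.natDegree = d)) := by
    intro P hP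
    rw [hRdef, Finset.mem_filter] at hP
    have hdvdn := hdegdvd P hP.1
    have hlt : P.natDegree ≤ n / 2 := by
      obtain ⟨c, hc⟩ := hdvdn
      have hc2 : 2 ≤ c := by
        rcases Nat.lt_or_ge c 2 with h | h
        · interval_cases c
          · omega
          · exfalso; exact hP.2 (by omega)
        · exact h
      rw [Nat.le_div_iff_mul_le (by omega)]
      calc P.natDegree * 2 ≤ P.natDegree * c := Nat.mul_le_mul_left _ hc2
      _ = n := hc.symm
    exact Finset.mem_biUnion.mpr ⟨P.natDegree, Finset.mem_range.mpr (by omega),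
      Finset.mem_filter.mpr ⟨hP.1, rfl⟩⟩
  have hdisj : (↑(Finset.range (n / 2 + 1)) : Set ℕ).PairwiseDisjoint
      (fun d => Mf.filter (fun P => P.natDegree = d)) := by
    intro d _ d' _ hne
    simp only [Function.onFun]
    rw [Finset.disjoint_left]
    intro P hP hP'
    rw [Finset.mem_filter] at hP hP'
    exact hne (hP.2 ▸ hP'.2 ▸ rfl)
  have hRbound : ∑ P ∈ R, P.natDegree ≤ 2 * q ^ (n / 2) := by
    calc ∑ P ∈ R, P.natDegree
        ≤ ∑ P ∈ (Finset.range (n / 2 + 1)).biUnion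
            (fun d => Mf.filter (fun P => P.natDegree = d)), P.natDegree :=
          Finset.sum_le_sum_of_subset hRsub
    _ = ∑ d ∈ Finset.range (n / 2 + 1), ∑ P ∈ Mf.filter (fun P => P.natDegree = d), P.natDegree :=
          Finset.sum_biUnion hdisj
    _ ≤ ∑ d ∈ Finset.range (n / 2 + 1), q ^ d := by
          refine Finset.sum_le_sum (fun d _ => ?_)
          rcases Nat.eq_zero_or_pos d with rfl | hd
          · calc ∑ P ∈ Mf.filter (fun P => P.natDegree = 0), P.natDegree
                = ∑ P ∈ Mf.filter (fun P => P.natDegree = 0), 0 :=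
                  Finset.sum_congr rfl (fun P hP => (Finset.mem_filter.mp hP).2)
            _ = 0 := by rw [Finset.sum_const, smul_zero]
            _ ≤ q ^ 0 := by omega
          · calc ∑ P ∈ Mf.filter (fun P => P.natDegree = d), P.natDegree
                = ∑ _P ∈ Mf.filter (fun P => P.natDegree = d), d :=
                  Finset.sum_congr rfl (fun P hP => (Finset.mem_filter.mp hP).2)
            _ = d * (Mf.filter (fun P => P.natDegree = d)).card := by
                  rw [Finset.sum_const, smul_eq_mul, Nat.mul_comm]
            _ ≤ q ^ d := hfilter_bound d hd
    _ ≤ 2 * q ^ (n / 2) := geom_sum_le hq3 _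
  -- q^n is big compared to q^(n/2)
  have hbig : 200 * q ^ (n / 2) ≤ q ^ n := by
    have h1 : q ^ n = q ^ (n / 2) * q ^ (n - n / 2) := by rw [← pow_add]; congr 1; omega
    have h2 : 200 ≤ q ^ (n - n / 2) := by
      calc (200 : ℕ) ≤ 3 ^ 5 := by norm_num
      _ ≤ 3 ^ (n - n / 2) := Nat.pow_le_pow_right (by omega) (by omega)
      _ ≤ q ^ (n - n / 2) := Nat.pow_le_pow_left hq3 _
    calc 200 * q ^ (n / 2) ≤ q ^ (n - n / 2) * q ^ (n / 2) := Nat.mul_le_mul_right _ h2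
    _ = q ^ n := by rw [Nat.mul_comm]; exact h1.symm
  omega

end Count

section Aux

lemma harmonic_lb (M : ℕ) :
    Real.log (M + 2) - Real.log 2 ≤ ∑ m ∈ Finset.range M, (1 : ℝ) / (m + 2) := by
  induction M with
  | zero => simp
  | succ M ih =>
    rw [Finset.sum_range_succ]
    have key : Real.log ((M:ℝ) + 3) - Real.log ((M:ℝ) + 2) ≤ 1 / ((M:ℝ) + 2) := by
      have h2 : (0:ℝ) < (M:ℝ) + 2 := by positivity
      have h := Real.log_le_sub_one_of_pos (show (0:ℝ) < ((M:ℝ)+3)/((M:ℝ)+2) by positivity)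
      rw [Real.log_div (by positivity) (by positivity)] at h
      have : ((M:ℝ)+3)/((M:ℝ)+2) - 1 = 1 / ((M:ℝ)+2) := by
        field_simp
        norm_num
      linarith
    push_cast
    push_cast at ih
    have e : ((M:ℝ) + 1) + 2 = (M:ℝ) + 3 := by ring
    rw [e]
    linarith

lemma log_one_add_ge {t : ℝ} (ht : 0 ≤ t) : t - t ^ 2 ≤ Real.log (1 + t) := by
  have h1 : (0:ℝ) < 1 + t := by linarith
  have h := Real.log_le_sub_one_of_pos (show (0:ℝ) < (1+t)⁻¹ by positivity)
  rw [Real.log_inv] at h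
  have h3 : (1+t)⁻¹ ≤ 1 - t + t^2 := by
    rw [inv_eq_one_div, div_le_iff₀ h1]
    nlinarith
  linarith

lemma log_q_ge {q : ℕ} (hq : 3 ≤ q) : (1.09 : ℝ) ≤ Real.log q := by
  have h3 : (3:ℝ) ≤ (q:ℝ) := by exact_mod_cast hq
  have hexp : Real.exp 1.09 ≤ 3 := by
    have he : Real.exp 1 < 2.7182818286 := Real.exp_one_lt_d9
    have h09 : (0.91:ℝ) ≤ Real.exp (-0.09) := by
      have := Real.add_one_le_exp (-0.09 : ℝ)
      linarith
    have hpos : (0:ℝ) < Real.exp (-0.09) := Real.exp_pos _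
    have h09' : Real.exp (0.09:ℝ) ≤ 1/0.91 := by
      rw [show (0.09:ℝ) = -(-0.09) by norm_num, Real.exp_neg]
      rw [one_div]
      exact inv_anti₀ (by norm_num) h09
    have : Real.exp (1.09:ℝ) = Real.exp 1 * Real.exp (0.09:ℝ) := by
      rw [← Real.exp_add]; norm_num
    rw [this]
    have hexp09pos : (0:ℝ) < Real.exp (0.09:ℝ) := Real.exp_pos _
    calc Real.exp 1 * Real.exp (0.09:ℝ) ≤ 2.7182818286 * (1/0.91) := by
          apply mul_le_mul he.le h09' hexp09pos.le (by norm_num)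
    _ ≤ 3 := by norm_num
  calc (1.09:ℝ) = Real.log (Real.exp 1.09) := (Real.log_exp _).symm
  _ ≤ Real.log 3 := Real.log_le_log (Real.exp_pos _) hexp
  _ ≤ Real.log q := Real.log_le_log (by norm_num) h3

lemma finite_degree_le {F : Type*} [Field F] [Fintype F] (D : ℕ) :
    {P : F[X] | P.natDegree ≤ D}.Finite := by
  apply Set.Finite.of_finite_image (f := fun P : F[X] => fun i : Fin (D+1) => P.coeff i)
  · exact Set.toFinite _
  · intro P hP P' hP' h
    simp only [Set.mem_setOf_eq] at hP hP'
    ext i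
    rcases Nat.lt_or_ge i (D+1) with hi | hi
    · exact congrFun h ⟨i, hi⟩
    · rw [coeff_eq_zero_of_natDegree_lt (by omega), coeff_eq_zero_of_natDegree_lt (by omega)]

end Aux

set_option maxHeartbeats 1000000 in
lemma main_calc {F : Type*} [Field F] [Fintype F] (hq3 : 3 ≤ Fintype.card F)
    {γ : ℝ} (hγ0 : 0 < γ) (hγ1 : γ < 1) (N : ℝ)
    (hx : 0 < Real.log N)
    (hy : 0 < Real.log (Real.log N))
    (hz : 100 ≤ Real.log (Real.log (Real.log N)))
    (hE1 : 100 * Real.log 2 ≤ γ * Real.log (Real.log (Real.log N)))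
    (hE2 : Real.log (Real.log (Real.log N)) +
        (Real.log (Real.log N)) ^ γ * Real.log (Fintype.card F)
        ≤ Real.log (Real.log N) / 100)
    (hE3 : 10000 ≤ Real.log N * Real.log (Real.log N) * Real.log (Real.log (Real.log N)))
    (hE5 : 9 * Real.log (Fintype.card F) ≤ Real.log (Real.log N))
    (hE6 : 3 ≤ (Real.log (Real.log N)) ^ γ) :
    γ * Real.sqrt (Real.log N * Real.log (Real.log (Real.log N)) / Real.log (Real.log N)) ≤
      Real.log (∏ᶠ P ∈ resonatorPrimes F γ N,
        (1 + resonatorPsi F N P ^ 2 +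
            resonatorPsi F N P / Real.sqrt ((Fintype.card F : ℝ) ^ P.natDegree)) /
          (1 + resonatorPsi F N P ^ 2)) := by
  classical
  set q : ℕ := Fintype.card F with hqdef
  set x : ℝ := Real.log N with hxdef
  set y : ℝ := Real.log x with hydef
  set z : ℝ := Real.log y with hzdef
  have hzpos : (0:ℝ) < z := by linarith
  set c : ℝ := Real.sqrt (x * y / z) with hcdef
  set a : ℝ := Real.logb q (x * y) with hadef
  set T : ℝ := y ^ γ with hTdef
  have hq3' : (3:ℝ) ≤ (q:ℝ) := by exact_mod_cast hq3
  have hq1 : (1:ℝ) < (q:ℝ) := by linarith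
  have hqpos : (0:ℝ) < (q:ℝ) := by linarith
  have hlogq : (1.09:ℝ) ≤ Real.log q := log_q_ge hq3
  have hlogqpos : (0:ℝ) < Real.log q := by linarith
  have hxy : (0:ℝ) < x * y := by positivity
  have ha_eq : a = (y + z) / Real.log q := by
    rw [hadef, Real.logb, Real.log_mul hx.ne' hy.ne']
  have hqa : (q:ℝ) ^ a = x * y := Real.rpow_logb hqpos (by linarith) hxy
  have haT : 0 < T := Real.rpow_pos_of_pos hy γ
  have ha9 : 9 ≤ a := by
    rw [ha_eq, le_div_iff₀ hlogqpos]
    linarith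
  have hapos : 0 < a := by linarith
  have hT3 : (3:ℝ) ≤ T := hE6
  -- integer degree range
  set n₁ : ℕ := ⌊a⌋₊ + 2 with hn₁def
  set n₂ : ℕ := ⌊a + T⌋₊ with hn₂def
  have hn1_le : (n₁:ℝ) ≤ a + 2 := by
    have := Nat.floor_le hapos.le
    push_cast [hn₁def]
    linarith
  have hn1_gt : a + 1 < (n₁:ℝ) := by
    have := Nat.lt_floor_add_one a
    push_cast [hn₁def]
    linarith
  have hn2_le : (n₂:ℝ) ≤ a + T := Nat.floor_le (by positivity)
  have hn2_gt : a + T - 1 < (n₂:ℝ) := Nat.sub_one_lt_floor (a + T)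
  have hn12 : n₁ ≤ n₂ := by
    have : (n₁:ℝ) < (n₂:ℝ) := by linarith
    exact_mod_cast this.le
  have hn1_10 : 10 ≤ n₁ := by
    have h9 : 9 ≤ ⌊a⌋₊ := Nat.le_floor (by exact_mod_cast ha9)
    omega
  -- the chosen sets of irreducible polynomials
  choose Sf hSf1 hSf2 using countLemma (F := F) hq3
  set D : Finset ℕ := Finset.Icc n₁ n₂ with hDdef
  set S : Finset F[X] := D.biUnion Sf with hSdef
  -- bounds on the two logb expressions
  have hlow : Real.logb q ((q:ℝ) * x * y) = 1 + a := by
    rw [Real.logb, Real.log_mul (by positivity) hy.ne', Real.log_mul hqpos.ne' hx.ne',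
      hadef, Real.logb, Real.log_mul hx.ne' hy.ne']
    field_simp
    ring
  have hhigh : Real.logb q ((q:ℝ) ^ T * x * y) = T + a := by
    rw [Real.logb, Real.log_mul (by positivity) hy.ne',
      Real.log_mul (by positivity) hx.ne', Real.log_rpow hqpos,
      hadef, Real.logb, Real.log_mul hx.ne' hy.ne']
    field_simp
    ring
  -- membership of chosen polynomials
  have hmemP : ∀ n ∈ D, ∀ P ∈ Sf n, P ∈ resonatorPrimes F γ N := by
    intro n hn P hP
    obtain ⟨hmon, hirr, hdeg⟩ := hSf1 n P hP
    rw [Finset.mem_Icc] at hn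
    have hn_low : a + 1 < (n:ℝ) := lt_of_lt_of_le hn1_gt (by exact_mod_cast hn.1)
    have hn_high : (n:ℝ) ≤ a + T := le_trans (by exact_mod_cast hn.2) hn2_le
    refine ⟨hmon, hirr, ?_, ?_⟩
    · rw [← hxdef, ← hydef, ← hqdef, hlow, hdeg]
      linarith
    · rw [← hxdef, ← hydef, ← hqdef, hhigh, hdeg]
      linarith
  -- resonatorPrimes is finite
  have hsub_deg : resonatorPrimes F γ N ⊆ {P : F[X] | P.natDegree ≤ n₂} := by
    intro P hP
    obtain ⟨-, -, -, h2⟩ := hP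
    rw [← hxdef, ← hydef, ← hqdef, hhigh] at h2
    exact Nat.le_floor (by rw [hn₂def] at *; push_cast at *; linarith)
  have hPfin : (resonatorPrimes F γ N).Finite := (finite_degree_le n₂).subset hsub_deg
  -- the factor function
  obtain ⟨g, hgdef⟩ : ∃ g : F[X] → ℝ, ∀ P : F[X], g P =
      (1 + resonatorPsi F N P ^ 2 +
          resonatorPsi F N P / Real.sqrt ((q : ℝ) ^ P.natDegree)) /
        (1 + resonatorPsi F N P ^ 2) := ⟨_, fun P => rfl⟩
  have hpsi_def : ∀ P : F[X], resonatorPsi F N P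
      = c / Real.sqrt ((q:ℝ) ^ P.natDegree) / ((P.natDegree : ℝ) - a) := by
    intro P
    simp only [resonatorPsi, ← hxdef, ← hydef, ← hzdef, ← hqdef, ← hcdef, ← hadef]
  have hqn_pos : ∀ n : ℕ, (0:ℝ) < (q:ℝ) ^ n := fun n => by positivity
  have hqn_ge : ∀ n : ℕ, a + 1 ≤ (n:ℝ) → (q:ℝ) * (x * y) ≤ (q:ℝ) ^ n := by
    intro n hn
    have h1 : (q:ℝ) ^ (a + 1) ≤ (q:ℝ) ^ ((n:ℝ)) := Real.rpow_le_rpow_of_exponent_le hq1.le hn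
    rw [Real.rpow_natCast] at h1
    rw [Real.rpow_add hqpos, hqa, Real.rpow_one] at h1
    linarith [h1]
  have hc2 : c^2 = x*y/z := Real.sq_sqrt (by positivity)
  have hcpos : (0:ℝ) ≤ c := Real.sqrt_nonneg _
  -- 100 c ≤ 3 x y
  have hcle : 100 * c ≤ 3 * (x*y) := by
    have key : 10000 * (x*y) ≤ (x*y)^2*z := by
      have k1 : 10000 * (x*y) ≤ (x*y*z)*(x*y) := mul_le_mul_of_nonneg_right hE3 hxy.le
      have k2 : (x*y*z)*(x*y) = (x*y)^2*z := by ring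
      linarith
    have hsq100 : (100*c)^2 ≤ (3*(x*y))^2 := by
      rw [mul_pow, mul_pow, hc2]
      have e : (100:ℝ)^2 * (x*y/z) = 10000*(x*y)/z := by ring
      rw [e, div_le_iff₀ hzpos]
      have e2 : (0:ℝ) ≤ (x*y)^2*z := by positivity
      have e3 : (3:ℝ)^2*(x*y)^2*z = 9*((x*y)^2*z) := by ring
      rw [e3]
      linarith
    calc 100*c = Real.sqrt ((100*c)^2) := (Real.sqrt_sq (by positivity)).symm
    _ ≤ Real.sqrt ((3*(x*y))^2) := Real.sqrt_le_sqrt hsq100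
    _ = 3*(x*y) := Real.sqrt_sq (by positivity)
  -- key per-polynomial estimate
  have hkey : ∀ n ∈ D, ∀ P ∈ Sf n,
      (99/101) * (c / (q:ℝ)^n / ((n:ℝ) - a)) ≤ Real.log (g P) := by
    intro n hnD P hP
    obtain ⟨hmon, hirr, hdeg⟩ := hSf1 n P hP
    rw [hDdef, Finset.mem_Icc] at hnD
    have hn_low : a + 1 < (n:ℝ) := lt_of_lt_of_le hn1_gt (Nat.cast_le.mpr hnD.1)
    have hn_high : (n:ℝ) ≤ a + T := le_trans (Nat.cast_le.mpr hnD.2) hn2_le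
    have hm : (1:ℝ) < (n:ℝ) - a := by linarith
    have hmpos : (0:ℝ) < (n:ℝ) - a := by linarith
    have hA := hqn_ge n hn_low.le
    have hApos := hqn_pos n
    set s : ℝ := Real.sqrt ((q:ℝ)^n) with hsdef
    have hsq : s * s = (q:ℝ)^n := Real.mul_self_sqrt hApos.le
    have hspos : (0:ℝ) < s := Real.sqrt_pos.mpr hApos
    set ψ : ℝ := resonatorPsi F N P with hψdef
    have hψ : ψ = c / s / ((n:ℝ) - a) := by rw [hψdef, hpsi_def P, hdeg, hsdef]
    have hψ0 : 0 ≤ ψ := by rw [hψ]; positivity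
    set w : ℝ := c / (q:ℝ)^n / ((n:ℝ) - a) with hwdef
    have hw0 : 0 ≤ w := by rw [hwdef]; positivity
    have hψu : ψ / s = w := by
      rw [hψ, hwdef, ← hsq]
      ring
    -- ψ² ≤ 1/100
    have hψsq : ψ^2 ≤ 1/100 := by
      have h3 : ψ^2 = (c^2/((q:ℝ)^n)) / ((n:ℝ)-a)^2 := by
        rw [hψ, div_pow, div_pow, ← hsq]
        ring
      have h4 : ψ^2 ≤ c^2/((q:ℝ)^n) := by
        rw [h3]
        apply div_le_self (by positivity)
        rw [pow_two]
        have := mul_le_mul hm.le hm.le (by norm_num) (by linarith)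
        linarith
      have h2 : c^2/((q:ℝ)^n) ≤ 1/((q:ℝ)*z) := by
        rw [hc2, div_le_div_iff₀ hApos (by positivity)]
        have e : x*y/z*((q:ℝ)*z) = (q:ℝ)*(x*y) := by field_simp
        rw [e]
        linarith [hA]
      have h5 : 1/((q:ℝ)*z) ≤ 1/100 := by
        rw [div_le_div_iff₀ (by positivity) (by norm_num)]
        have := mul_le_mul hq3' hz (by norm_num) (by positivity)
        linarith
      linarith
    -- w ≤ 1/100
    have hw_le : w ≤ 1/100 := by
      have e1 : w ≤ c/((q:ℝ)^n) := by
        rw [hwdef]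
        apply div_le_self (by positivity) hm.le
      have e2 : c/((q:ℝ)^n) ≤ c/((q:ℝ)*(x*y)) := by gcongr
      have e3 : c/((q:ℝ)*(x*y)) ≤ 1/100 := by
        rw [div_le_div_iff₀ (by positivity) (by norm_num)]
        have k1 : 3*(x*y) ≤ (q:ℝ)*(x*y) := mul_le_mul_of_nonneg_right hq3' hxy.le
        linarith
      linarith
    -- the factor equals 1 + t
    set t : ℝ := w / (1 + ψ^2) with htdef
    have hψsqpos : (0:ℝ) < 1 + ψ^2 := by positivity
    have hg_eq : g P = 1 + t := by
      rw [hgdef P, ← hψdef, hdeg, ← hsdef, hψu, htdef]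
      field_simp
    have ht0 : 0 ≤ t := by rw [htdef]; positivity
    have htw : t ≤ w := by
      rw [htdef]
      apply div_le_self hw0 (by linarith [sq_nonneg ψ])
    have htw' : (100/101) * w ≤ t := by
      have h7 : 1 + ψ^2 ≤ 101/100 := by linarith [hψsq]
      have h6 : w / (101/100) ≤ w / (1 + ψ^2) := by gcongr
      have e : w / (101/100) = (100/101) * w := by ring
      rw [htdef]
      linarith [h6]
    have hlog := log_one_add_ge ht0
    have hfinal : (99/101)*w ≤ t - t^2 := by
      have k1 : t*t ≤ t*(1/100) := mul_le_mul_of_nonneg_left (le_trans htw hw_le) ht0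
      have e : t^2 = t*t := sq t
      linarith [htw']
    rw [hg_eq]
    linarith
  -- disjointness of the degree classes
  have hdisjoint : (↑D : Set ℕ).PairwiseDisjoint Sf := by
    intro n hn n' hn' hne
    simp only [Function.onFun]
    rw [Finset.disjoint_left]
    intro P hP hP'
    exact hne (((hSf1 n P hP).2.2).symm.trans ((hSf1 n' P hP').2.2))
  -- per-degree estimate
  have hdeg_sum : ∀ n ∈ D, (99/101)*(99/100) * (c/(a+T) * (1/((n:ℝ) - a)))
      ≤ ∑ P ∈ Sf n, Real.log (g P) := by
    intro n hnD
    have hnD' := Finset.mem_Icc.mp hnD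
    have hn10 : 10 ≤ n := le_trans hn1_10 hnD'.1
    have hcard := hSf2 n hn10
    have hcardR : (99:ℝ) * (q:ℝ)^n ≤ 100 * ((n:ℝ) * ((Sf n).card : ℝ)) := by
      exact_mod_cast hcard
    have hn_low : a + 1 < (n:ℝ) := lt_of_lt_of_le hn1_gt (Nat.cast_le.mpr hnD'.1)
    have hn_high : (n:ℝ) ≤ a + T := le_trans (Nat.cast_le.mpr hnD'.2) hn2_le
    have hmpos : (0:ℝ) < (n:ℝ) - a := by linarith
    have hnpos : (0:ℝ) < (n:ℝ) := by linarith
    have hApos := hqn_pos n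
    have s2 : (99/100)/(n:ℝ) ≤ ((Sf n).card:ℝ)/((q:ℝ)^n) := by
      rw [div_le_div_iff₀ hnpos hApos]
      linarith
    calc (99/101)*(99/100)*(c/(a+T) * (1/((n:ℝ)-a)))
        ≤ (99/101)*(99/100)*(c/(n:ℝ) * (1/((n:ℝ)-a))) := by
          have h1 : c/(a+T) ≤ c/(n:ℝ) := by gcongr
          have h0 : (0:ℝ) ≤ 1/((n:ℝ)-a) := by positivity
          have h2 := mul_le_mul_of_nonneg_right h1 h0
          exact mul_le_mul_of_nonneg_left h2 (by norm_num)
    _ = (99/101)*((99/100)/(n:ℝ)*(c/((n:ℝ)-a))) := by ring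
    _ ≤ (99/101)*(((Sf n).card:ℝ)/((q:ℝ)^n)*(c/((n:ℝ)-a))) := by
          have h0 : (0:ℝ) ≤ c/((n:ℝ)-a) := by positivity
          have h2 := mul_le_mul_of_nonneg_right s2 h0
          exact mul_le_mul_of_nonneg_left h2 (by norm_num)
    _ = ((Sf n).card:ℝ) * ((99/101) * (c/(q:ℝ)^n/((n:ℝ)-a))) := by ring
    _ = ∑ _P ∈ Sf n, (99/101) * (c/(q:ℝ)^n/((n:ℝ)-a)) := by
          rw [Finset.sum_const, nsmul_eq_mul]
    _ ≤ ∑ P ∈ Sf n, Real.log (g P) := Finset.sum_le_sum (fun P hP => hkey n hnD P hP)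
  -- harmonic sum lower bound
  have hharm : γ*z - Real.log 2 ≤ ∑ n ∈ D, 1/((n:ℝ) - a) := by
    have hIco : D = Finset.Ico n₁ (n₂+1) := by rw [hDdef, Finset.Ico_add_one_right_eq_Icc]
    rw [hIco, Finset.sum_Ico_eq_sum_range]
    have hMT : T ≤ ((n₂ + 1 - n₁ : ℕ):ℝ) + 2 := by
      have e : ((n₂ + 1 - n₁ : ℕ):ℝ) = (n₂:ℝ) + 1 - (n₁:ℝ) := by
        have h12 : n₁ ≤ n₂ + 1 := by omega
        push_cast [Nat.cast_sub h12]
        ring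
      rw [e]; linarith [hn2_gt, hn1_le]
    have h1 : γ*z - Real.log 2 = Real.log T - Real.log 2 := by
      rw [hTdef, Real.log_rpow hy, ← hzdef]
    rw [h1]
    calc Real.log T - Real.log 2 ≤ Real.log (((n₂ + 1 - n₁:ℕ):ℝ)+2) - Real.log 2 := by
          have := Real.log_le_log haT hMT
          linarith
    _ ≤ ∑ m ∈ Finset.range (n₂ + 1 - n₁), (1:ℝ)/((m:ℝ)+2) := harmonic_lb _
    _ ≤ ∑ i ∈ Finset.range (n₂ + 1 - n₁), 1/(((n₁ + i : ℕ):ℝ) - a) := by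
          apply Finset.sum_le_sum
          intro i _
          have hi0 : (0:ℝ) ≤ (i:ℝ) := by positivity
          have h1' : (0:ℝ) < ((n₁:ℝ) + (i:ℝ)) - a := by linarith [hn1_gt]
          have h2' : ((n₁:ℝ) + (i:ℝ)) - a ≤ (i:ℝ) + 2 := by linarith [hn1_le]
          have h3' := one_div_le_one_div_of_le h1' h2'
          rw [Nat.cast_add]
          exact h3'
  -- sum over S
  have hlog2pos : (0:ℝ) < Real.log 2 := Real.log_pos (by norm_num)
  have hgz_pos : (0:ℝ) < γ*z := by positivity
  have h2pos : (0:ℝ) < γ*z - Real.log 2 := by linarith [hE1]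
  have htotal : (99/101)*(99/100)*(c/(a+T)) * (γ*z - Real.log 2)
      ≤ ∑ P ∈ S, Real.log (g P) := by
    rw [hSdef, Finset.sum_biUnion hdisjoint]
    calc (99/101)*(99/100)*(c/(a+T)) * (γ*z - Real.log 2)
        ≤ (99/101)*(99/100)*(c/(a+T)) * (∑ n ∈ D, 1/((n:ℝ) - a)) :=
          mul_le_mul_of_nonneg_left hharm (by positivity)
    _ = ∑ n ∈ D, (99/101)*(99/100)*(c/(a+T) * (1/((n:ℝ) - a))) := by
          rw [Finset.mul_sum]
          exact Finset.sum_congr rfl (fun n _ => by ring)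
    _ ≤ ∑ n ∈ D, ∑ P ∈ Sf n, Real.log (g P) := Finset.sum_le_sum hdeg_sum
  -- every resonator prime gives a factor ≥ 1
  have hg_ge1 : ∀ P ∈ resonatorPrimes F γ N, 1 ≤ g P := by
    intro P hPmem
    obtain ⟨hmon, hirr, h1, h2⟩ := hPmem
    rw [← hxdef, ← hydef, ← hqdef, hlow] at h1
    have hmpos : (0:ℝ) < (P.natDegree:ℝ) - a := by linarith
    have hψ0 : 0 ≤ resonatorPsi F N P := by rw [hpsi_def]; positivity
    have hu0 : 0 ≤ resonatorPsi F N P / Real.sqrt ((q:ℝ)^P.natDegree) := by positivity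
    rw [hgdef P, le_div_iff₀ (by positivity)]
    linarith [sq_nonneg (resonatorPsi F N P)]
  -- convert the finprod
  have hconv : (∏ᶠ P ∈ resonatorPrimes F γ N,
      (1 + resonatorPsi F N P ^ 2 +
          resonatorPsi F N P / Real.sqrt ((q : ℝ) ^ P.natDegree)) /
        (1 + resonatorPsi F N P ^ 2))
      = ∏ᶠ P ∈ resonatorPrimes F γ N, g P :=
    finprod_congr (fun P => finprod_congr (fun _ => (hgdef P).symm))
  have hlog_eq : Real.log (∏ᶠ P ∈ resonatorPrimes F γ N, g P)
      = ∑ P ∈ hPfin.toFinset, Real.log (g P) := by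
    rw [finprod_mem_eq_finite_toFinset_prod _ hPfin]
    apply Real.log_prod
    intro P hP
    have h1 := hg_ge1 P ((Set.Finite.mem_toFinset hPfin).mp hP)
    linarith
  have hSsub : S ⊆ hPfin.toFinset := by
    intro P hP
    rw [hSdef, Finset.mem_biUnion] at hP
    obtain ⟨n, hn, hPn⟩ := hP
    exact (Set.Finite.mem_toFinset hPfin).mpr (hmemP n hn P hPn)
  have hmono : ∑ P ∈ S, Real.log (g P) ≤ ∑ P ∈ hPfin.toFinset, Real.log (g P) :=
    Finset.sum_le_sum_of_subset_of_nonneg hSsub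
      (fun P hP _ => Real.log_nonneg (hg_ge1 P ((Set.Finite.mem_toFinset hPfin).mp hP)))
  -- final assembly
  have haTpos : (0:ℝ) < a + T := by linarith
  have haT_ub : a + T ≤ (101/100)*y/Real.log q := by
    rw [ha_eq]
    have e : (y+z)/Real.log (q:ℝ) + T = (y + z + T*Real.log (q:ℝ))/Real.log (q:ℝ) := by
      field_simp
    rw [e]
    gcongr
    linarith [hE2]
  have hfrac : (100/101)*(c*Real.log (q:ℝ)/y) ≤ c/(a+T) := by
    have h1 : c/((101/100)*y/Real.log (q:ℝ)) ≤ c/(a+T) := by gcongr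
    have e : c/((101/100)*y/Real.log (q:ℝ)) = (100/101)*(c*Real.log (q:ℝ)/y) := by
      field_simp
    linarith [h1, e ▸ h1]
  have hczy : c * z / y = Real.sqrt (x*z/y) := by
    have e : x*z/y = (x*y/z)*(z/y)^2 := by
      field_simp
    rw [e, Real.sqrt_mul (by positivity), Real.sqrt_sq (by positivity), ← hcdef]
    ring
  have hstep1 : (99/101)*(99/100)*((100/101)*(c*Real.log (q:ℝ)/y)) * ((99/100)*(γ*z))
      ≤ (99/101)*(99/100)*(c/(a+T)) * (γ*z - Real.log 2) := by
    have hb1 : (99/100)*(γ*z) ≤ γ*z - Real.log 2 := by linarith [hE1]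
    have hb0 : (0:ℝ) ≤ (99/100)*(γ*z) := by positivity
    apply mul_le_mul ?_ hb1 hb0 ?_
    · exact mul_le_mul_of_nonneg_left hfrac (by norm_num)
    · positivity
  have hnum : γ * (c*z/y) ≤ (99/101)*(99/100)*((100/101)*(c*Real.log (q:ℝ)/y)) * ((99/100)*(γ*z)) := by
    have e : (99/101)*(99/100)*((100/101)*(c*Real.log (q:ℝ)/y)) * ((99/100)*(γ*z))
        = ((99*99*100*99:ℝ)/(101*100*101*100)) * Real.log (q:ℝ) * (γ*(c*z/y)) := by
      ring
    rw [e]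
    have hKpos : (0:ℝ) < ((99*99*100*99:ℝ)/(101*100*101*100)) := by norm_num
    have hK : (1:ℝ) ≤ ((99*99*100*99:ℝ)/(101*100*101*100)) * Real.log (q:ℝ) := by
      have h2 := mul_le_mul_of_nonneg_left hlogq hKpos.le
      have h3 : ((99*99*100*99:ℝ)/(101*100*101*100)) * 1.09 ≥ 1 := by norm_num
      linarith
    have h0 : (0:ℝ) ≤ γ*(c*z/y) := by positivity
    exact le_mul_of_one_le_left h0 hK
  rw [hconv, hlog_eq]
  calc γ * Real.sqrt (x*z/y) = γ * (c*z/y) := by rw [hczy]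
  _ ≤ (99/101)*(99/100)*((100/101)*(c*Real.log (q:ℝ)/y)) * ((99/100)*(γ*z)) := hnum
  _ ≤ (99/101)*(99/100)*(c/(a+T)) * (γ*z - Real.log 2) := hstep1
  _ ≤ ∑ P ∈ S, Real.log (g P) := htotal
  _ ≤ ∑ P ∈ hPfin.toFinset, Real.log (g P) := hmono


open Filter

/-- For q ≥ 3 fixed and γ ∈ (0,1), as N → ∞,
ln A_N ≥ (γ + o(1)) sqrt(ln N · ln ln ln N / ln ln N), where
A_N = prod over P in 𝕡 of (1 + psi(P)^2 + psi(P)|P|^{-1/2})/(1 + psi(P)^2). -/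
theorem stmt_18 {F : Type*} [Field F] [Fintype F] (hq : 3 ≤ Fintype.card F)
    (γ : ℝ) (hγ : γ ∈ Set.Ioo (0 : ℝ) 1) (ε : ℝ) (hε : 0 < ε) :
    ∃ N₀ : ℝ, ∀ N : ℝ, N₀ ≤ N →
      (γ - ε) * Real.sqrt (Real.log N * Real.log (Real.log (Real.log N)) /
          Real.log (Real.log N)) ≤
        Real.log (∏ᶠ P ∈ resonatorPrimes F γ N,
          (1 + resonatorPsi F N P ^ 2 +
              resonatorPsi F N P / Real.sqrt ((Fintype.card F : ℝ) ^ P.natDegree)) /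
            (1 + resonatorPsi F N P ^ 2)) := by
  obtain ⟨hγ0, hγ1⟩ := hγ
  have hx_t : Tendsto (fun N : ℝ => Real.log N) atTop atTop := Real.tendsto_log_atTop
  have hy_t : Tendsto (fun N : ℝ => Real.log (Real.log N)) atTop atTop :=
    Real.tendsto_log_atTop.comp hx_t
  have hz_t : Tendsto (fun N : ℝ => Real.log (Real.log (Real.log N))) atTop atTop :=
    Real.tendsto_log_atTop.comp hy_t
  have E_x : ∀ᶠ N : ℝ in atTop, 0 < Real.log N := hx_t.eventually_gt_atTop 0
  have E_y : ∀ᶠ N : ℝ in atTop, 0 < Real.log (Real.log N) := hy_t.eventually_gt_atTop 0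
  have E_z : ∀ᶠ N : ℝ in atTop, 100 ≤ Real.log (Real.log (Real.log N)) :=
    hz_t.eventually_ge_atTop 100
  have E_1 : ∀ᶠ N : ℝ in atTop, 100 * Real.log 2 ≤ γ * Real.log (Real.log (Real.log N)) :=
    (hz_t.const_mul_atTop hγ0).eventually_ge_atTop (100 * Real.log 2)
  have E_3 : ∀ᶠ N : ℝ in atTop,
      10000 ≤ Real.log N * Real.log (Real.log N) * Real.log (Real.log (Real.log N)) := by
    filter_upwards [hx_t.eventually_ge_atTop 100, hy_t.eventually_ge_atTop 100,
      hz_t.eventually_ge_atTop 1] with N h1 h2 h3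
    have k1 : (100:ℝ)*100 ≤ Real.log N * Real.log (Real.log N) :=
      mul_le_mul h1 h2 (by norm_num) (by linarith)
    have k2 : (10000:ℝ)*1 ≤ Real.log N * Real.log (Real.log N) * Real.log (Real.log (Real.log N)) :=
      mul_le_mul (by linarith) h3 (by norm_num) (by linarith)
    linarith
  have E_5 : ∀ᶠ N : ℝ in atTop, 9 * Real.log (Fintype.card F) ≤ Real.log (Real.log N) :=
    hy_t.eventually_ge_atTop _
  have E_6 : ∀ᶠ N : ℝ in atTop, 3 ≤ (Real.log (Real.log N)) ^ γ :=
    ((tendsto_rpow_atTop hγ0).comp hy_t).eventually_ge_atTop 3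
  have E_2 : ∀ᶠ N : ℝ in atTop, Real.log (Real.log (Real.log N)) +
      (Real.log (Real.log N)) ^ γ * Real.log (Fintype.card F)
      ≤ Real.log (Real.log N) / 100 := by
    have key : ∀ᶠ w : ℝ in atTop,
        Real.log w + w ^ γ * Real.log (Fintype.card F) ≤ w / 100 := by
      have t1 : Tendsto (fun w : ℝ => Real.log w / w) atTop (nhds 0) :=
        Real.isLittleO_log_id_atTop.tendsto_div_nhds_zero
      have t2 : Tendsto (fun w : ℝ => w ^ (γ - 1)) atTop (nhds 0) := by
        have h := tendsto_rpow_neg_atTop (y := 1 - γ) (by linarith)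
        have e : (fun w : ℝ => w ^ (-(1 - γ))) = fun w : ℝ => w ^ (γ - 1) := by
          funext w; congr 1; ring
        rwa [e] at h
      have t3 : Tendsto (fun w : ℝ => Real.log w / w + w ^ (γ - 1) * Real.log (Fintype.card F))
          atTop (nhds (0 + 0 * Real.log (Fintype.card F))) :=
        t1.add (t2.mul_const _)
      rw [zero_add, zero_mul] at t3
      have hsmall : ∀ᶠ w : ℝ in atTop,
          Real.log w / w + w ^ (γ - 1) * Real.log (Fintype.card F) < 1/100 :=
        t3.eventually (gt_mem_nhds (by norm_num : (0:ℝ) < 1/100))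
      filter_upwards [hsmall, eventually_gt_atTop (0:ℝ)] with w hw hw0
      have h1 := mul_le_mul_of_nonneg_left hw.le hw0.le
      have e1 : w * (Real.log w / w) = Real.log w := by field_simp
      have e2 : w * (w ^ (γ - 1) * Real.log (Fintype.card F))
          = w ^ γ * Real.log (Fintype.card F) := by
        rw [Real.rpow_sub hw0, Real.rpow_one]
        field_simp
      rw [mul_add, e1, e2] at h1
      linarith
    exact hy_t.eventually key
  have Eall := (E_x.and (E_y.and (E_z.and (E_1.and (E_2.and (E_3.and (E_5.and E_6))))))).and
    (eventually_ge_atTop (1:ℝ))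
  obtain ⟨N₀, hN₀⟩ := eventually_atTop.mp Eall
  refine ⟨N₀, fun N hN => ?_⟩
  obtain ⟨⟨h_x, h_y, h_z, h_1, h_2, h_3, h_5, h_6⟩, -⟩ := hN₀ N hN
  have hmain := main_calc hq hγ0 hγ1 N h_x h_y h_z h_1 h_2 h_3 h_5 h_6
  have hsq : (0:ℝ) ≤ Real.sqrt (Real.log N * Real.log (Real.log (Real.log N)) /
      Real.log (Real.log N)) := Real.sqrt_nonneg _
  nlinarith [hmain, hsq, mul_le_mul_of_nonneg_right (by linarith : γ - ε ≤ γ) hsq]
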